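/- For every (x₁,x₂) ∈ ℝ² ∖ ℤ², λ(x₁, x₂ + 1) = λ(x₁, x₂), i.e. the function λ is periodic with period 1 in the second variable. -/

import Mathlib

open Real Filter

/-- The Green function `λ` of the Laplacian on the flat unit torus `ℝ²/ℤ²`, viewed as a
function on `ℝ²` (well defined away from the lattice `ℤ²`). -/
noncomputable def lam (x : ℝ × ℝ) : ℝ :=
  4 * π * (x.2 ^ 2 - x.2 + 1 / 6)
    - 2 * Real.log (1 + Real.exp (-4 * π * x.2) -
        2 * Real.exp (-2 * π * x.2) * Real.cos (2 * π * x.1))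
    - 2 * ∑' n : ℕ, Real.log (1 + Real.exp (-4 * π * (n + 1) - 4 * π * x.2) -
        2 * Real.exp (-2 * π * (n + 1) - 2 * π * x.2) * Real.cos (2 * π * x.1))
    - 2 * ∑' n : ℕ, Real.log (1 + Real.exp (-4 * π * (n + 1) + 4 * π * x.2) -
        2 * Real.exp (-2 * π * (n + 1) + 2 * π * x.2) * Real.cos (2 * π * x.1))

/-- The building block of `lam`: `FF c t = log (1 + e^{-4πt} - 2 e^{-2πt} cos (2πc))`. -/
noncomputable def FF (c t : ℝ) : ℝ :=
  Real.log (1 + Real.exp (-4 * π * t) - 2 * Real.exp (-2 * π * t) * Real.cos (2 * π * c))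

lemma abs_log_one_add_le {u : ℝ} (hu : |u| ≤ 1/2) : |Real.log (1 + u)| ≤ 2 * |u| := by
  obtain ⟨hl, hr⟩ := abs_le.mp hu
  have h1 : (0:ℝ) < 1 + u := by linarith
  have h2 : Real.log (1 + u) ≤ u := by
    have := Real.log_le_sub_one_of_pos h1; linarith
  have h3 : -Real.log (1 + u) ≤ (1 + u)⁻¹ - 1 := by
    have := Real.log_le_sub_one_of_pos (inv_pos.mpr h1)
    rwa [Real.log_inv] at this
  have h4 : (1 + u)⁻¹ - 1 ≤ 2 * |u| := by
    rw [sub_le_iff_le_add, inv_le_iff_one_le_mul₀ h1]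
    nlinarith [neg_abs_le u, le_abs_self u, abs_nonneg u]
  refine abs_le.mpr ⟨by linarith, ?_⟩
  have := le_abs_self u; linarith

lemma summable_FF (c a : ℝ) : Summable (fun n : ℕ => FF c ((n : ℝ) + 1 + a)) := by
  have hπ : (0:ℝ) < π := Real.pi_pos
  apply Summable.of_norm_bounded_eventually_nat
    (g := fun n => 6 * Real.exp (-2 * π * (1 + a)) * Real.exp (-2 * π) ^ n)
  · exact (summable_geometric_of_lt_one (Real.exp_nonneg _)
      (Real.exp_lt_one_iff.mpr (by nlinarith))).mul_left _
  · have h0 : Filter.Tendsto (fun n : ℕ => Real.exp (-2 * π * ((n : ℝ) + 1 + a)))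
        Filter.atTop (nhds 0) := by
      apply Real.tendsto_exp_atBot.comp
      have h1 : Filter.Tendsto (fun n : ℕ => (n : ℝ) + 1 + a) Filter.atTop Filter.atTop :=
        Filter.tendsto_atTop_add_const_right _ _
          (Filter.tendsto_atTop_add_const_right _ _ tendsto_natCast_atTop_atTop)
      exact (tendsto_const_mul_atBot_of_neg (by nlinarith : -2*π < 0)).mpr h1
    filter_upwards [h0.eventually_lt_const (by norm_num : (0:ℝ) < 1/6)] with n hn
    set t : ℝ := (n : ℝ) + 1 + a with ht
    set e : ℝ := Real.exp (-2 * π * t) with he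
    have hepos : 0 < e := Real.exp_pos _
    have h4 : Real.exp (-4 * π * t) = e ^ 2 := by
      rw [he, sq, ← Real.exp_add]; ring_nf
    set u : ℝ := Real.exp (-4 * π * t) - 2 * e * Real.cos (2 * π * c) with hu
    have hcos : |Real.cos (2 * π * c)| ≤ 1 := Real.abs_cos_le_one _
    have habs : |u| ≤ 3 * e := by
      rw [hu, h4]
      have h5 : e ^ 2 ≤ e := by nlinarith
      have := abs_le.mp hcos
      rw [abs_le]; constructor <;> nlinarith
    have hsmall : |u| ≤ 1/2 := by nlinarith
    have hlog : |Real.log (1 + u)| ≤ 2 * |u| := abs_log_one_add_le hsmall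
    have hFF : FF c t = Real.log (1 + u) := by rw [FF]; congr 1; rw [hu]; ring
    have hgeom : e = Real.exp (-2 * π * (1 + a)) * Real.exp (-2 * π) ^ n := by
      rw [he, ht, ← Real.exp_nat_mul, ← Real.exp_add]; ring_nf
    rw [Real.norm_eq_abs, hFF]
    calc |Real.log (1 + u)| ≤ 2 * |u| := hlog
      _ ≤ 6 * e := by nlinarith
      _ = 6 * Real.exp (-2 * π * (1 + a)) * Real.exp (-2 * π) ^ n := by rw [hgeom]; ring

lemma lam_eq (x₁ x₂ : ℝ) : lam (x₁, x₂) =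
    4 * π * (x₂ ^ 2 - x₂ + 1 / 6) - 2 * FF x₁ x₂
      - 2 * ∑' n : ℕ, FF x₁ ((n : ℝ) + 1 + x₂)
      - 2 * ∑' n : ℕ, FF x₁ ((n : ℝ) + 1 - x₂) := by
  have h1 : ∀ n : ℕ, Real.log (1 + Real.exp (-4 * π * ((n : ℝ) + 1) - 4 * π * x₂) -
      2 * Real.exp (-2 * π * ((n : ℝ) + 1) - 2 * π * x₂) * Real.cos (2 * π * x₁))
      = FF x₁ ((n : ℝ) + 1 + x₂) := by
    intro n; rw [FF]; ring_nf
  have h2 : ∀ n : ℕ, Real.log (1 + Real.exp (-4 * π * ((n : ℝ) + 1) + 4 * π * x₂) -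
      2 * Real.exp (-2 * π * ((n : ℝ) + 1) + 2 * π * x₂) * Real.cos (2 * π * x₁))
      = FF x₁ ((n : ℝ) + 1 - x₂) := by
    intro n; rw [FF]; ring_nf
  simp only [lam, FF, tsum_congr h1, tsum_congr h2]

lemma FF_neg (x₁ x₂ : ℝ) (h : ¬ ∃ m k : ℤ, x₁ = (m : ℝ) ∧ x₂ = (k : ℝ)) :
    FF x₁ (-x₂) = 4 * π * x₂ + FF x₁ x₂ := by
  have hπ : (0:ℝ) < π := Real.pi_pos
  set e : ℝ := Real.exp (-2 * π * x₂) with he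
  have hepos : 0 < e := Real.exp_pos _
  have h4 : Real.exp (-4 * π * x₂) = e ^ 2 := by
    rw [he, sq, ← Real.exp_add]; ring_nf
  set c : ℝ := Real.cos (2 * π * x₁) with hc
  have hcle : c ≤ 1 := Real.cos_le_one _
  have hA : 0 < 1 + Real.exp (-4 * π * x₂) - 2 * Real.exp (-2 * π * x₂) * c := by
    rw [h4, ← he]
    rcases eq_or_ne x₂ 0 with hx2 | hx2
    · have hc1 : c < 1 := by
        rcases lt_or_eq_of_le hcle with h' | h'
        · exact h'
        · exfalso
          rw [hc] at h'
          obtain ⟨n, hn⟩ := (Real.cos_eq_one_iff _).mp h'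
          refine h ⟨n, 0, ?_, by rw [hx2]; simp⟩
          have h2π : (2:ℝ) * π ≠ 0 := by positivity
          have h5 : (2 * π) * x₁ = (2 * π) * (n : ℝ) := by linarith [hn]
          exact (mul_left_cancel₀ h2π h5)
      have he1 : e = 1 := by rw [he, hx2]; simp
      nlinarith
    · have he1 : e ≠ 1 := by
        rw [he, Ne, Real.exp_eq_one_iff]
        intro h'; exact hx2 (by nlinarith)
      have : (1 - e) ^ 2 > 0 := by
        have := sub_ne_zero_of_ne (Ne.symm he1); positivity
      nlinarith
  have key : 1 + Real.exp (-4 * π * (-x₂)) - 2 * Real.exp (-2 * π * (-x₂)) * c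
      = Real.exp (4 * π * x₂) * (1 + Real.exp (-4 * π * x₂) - 2 * Real.exp (-2 * π * x₂) * c) := by
    have e1 : Real.exp (4 * π * x₂) * Real.exp (-4 * π * x₂) = 1 := by
      rw [← Real.exp_add]; ring_nf; exact Real.exp_zero
    have e2 : Real.exp (4 * π * x₂) * Real.exp (-2 * π * x₂) = Real.exp (-2 * π * (-x₂)) := by
      rw [← Real.exp_add]; ring_nf
    have e3 : Real.exp (-4 * π * (-x₂)) = Real.exp (4 * π * x₂) := by ring_nf
    rw [e3]; nlinarith [e1, e2]
  rw [FF, FF, ← hc, key, Real.log_mul (Real.exp_ne_zero _) (ne_of_gt hA), Real.log_exp]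

/-- `λ` is periodic with period 1 in the second variable. -/
theorem lam_periodic_snd (x₁ x₂ : ℝ) (h : ¬ ∃ m k : ℤ, x₁ = (m : ℝ) ∧ x₂ = (k : ℝ)) :
    lam (x₁, x₂ + 1) = lam (x₁, x₂) := by
  set S₁ : ℝ := ∑' n : ℕ, FF x₁ ((n : ℝ) + 1 + x₂) with hS₁
  set S₂ : ℝ := ∑' n : ℕ, FF x₁ ((n : ℝ) + 1 - x₂) with hS₂
  have hsum₁ : Summable (fun n : ℕ => FF x₁ ((n : ℝ) + 1 + x₂)) := summable_FF x₁ x₂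
  have hsumg : Summable (fun n : ℕ => FF x₁ ((n : ℝ) - x₂)) := by
    refine (summable_FF x₁ (-1 - x₂)).congr fun n => ?_
    congr 1; ring
  -- Shift of the first series
  have stepA : (∑' n : ℕ, FF x₁ ((n : ℝ) + 1 + (x₂ + 1))) = S₁ - FF x₁ (1 + x₂) := by
    have h0 := Summable.tsum_eq_zero_add hsum₁
    have hcongr : (∑' n : ℕ, FF x₁ ((↑(n + 1) : ℝ) + 1 + x₂))
        = ∑' n : ℕ, FF x₁ ((n : ℝ) + 1 + (x₂ + 1)) := by
      refine tsum_congr fun n => ?_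
      congr 1; push_cast; ring
    rw [hcongr] at h0
    have h00 : FF x₁ ((↑(0:ℕ) : ℝ) + 1 + x₂) = FF x₁ (1 + x₂) := by norm_num
    rw [h00] at h0
    rw [← hS₁] at h0
    linarith
  -- Shift of the second series
  have stepB : (∑' n : ℕ, FF x₁ ((n : ℝ) + 1 - (x₂ + 1))) = FF x₁ (-x₂) + S₂ := by
    have hcongr1 : (∑' n : ℕ, FF x₁ ((n : ℝ) + 1 - (x₂ + 1)))
        = ∑' n : ℕ, FF x₁ ((n : ℝ) - x₂) := by
      refine tsum_congr fun n => ?_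
      congr 1; ring
    have h0 := Summable.tsum_eq_zero_add hsumg
    have hcongr2 : (∑' n : ℕ, FF x₁ ((↑(n + 1) : ℝ) - x₂))
        = ∑' n : ℕ, FF x₁ ((n : ℝ) + 1 - x₂) := by
      refine tsum_congr fun n => ?_
      congr 1; push_cast; ring
    rw [hcongr2] at h0
    have h00 : FF x₁ ((↑(0:ℕ) : ℝ) - x₂) = FF x₁ (-x₂) := by norm_num
    rw [h00] at h0
    rw [hcongr1, h0, ← hS₂]
  have hFFcomm : FF x₁ (x₂ + 1) = FF x₁ (1 + x₂) := by congr 1; ring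
  rw [lam_eq x₁ (x₂ + 1), lam_eq x₁ x₂, stepA, stepB, FF_neg x₁ x₂ h, hFFcomm, ← hS₁, ← hS₂]
  ring
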